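/- arXiv:0901.3560 — 2 statements merged into one kernel-verified Lean document; each statement's English description precedes it below -/
import Mathlib

section
/- For all φ in the domain of the one-dimensional harmonic oscillator operator -d²/dx² + x² on L²(ℝ), one has ‖x²φ‖² ≤ ‖(-d²/dx² + x²)φ‖² + 2‖φ‖². -/
open MeasureTheory


lemma invsq_deriv (t : ℝ) (ht : t ≠ 0) (ε : ℝ) :
    HasDerivAt (fun s : ℝ => -(ε/s)) (ε/t^2) t := by
  have h := ((hasDerivAt_inv ht).const_mul ε).neg
  have heq : (-fun s:ℝ => ε * s⁻¹) = fun s => -(ε/s) := by funext s; simp [div_eq_mul_inv]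
  rw [heq] at h
  refine h.congr_deriv ?_
  field_simp

lemma no_int_top (A A' : ℝ → ℝ) (hA : ∀ x, HasDerivAt A (A' x) x)
    (hA'c : Continuous A') (hApos : ∀ x, 0 ≤ A x) (hint : Integrable A)
    {T ε : ℝ} (hT : 1 ≤ T) (hε : 0 < ε) (hbig : ∀ x, T ≤ x → ε / x^2 ≤ A' x) : False := by
  have hT0 : 0 < T := lt_of_lt_of_le one_pos hT
  have key : ∀ x, 2*T ≤ x → ε/(2*T) ≤ A x := by
    intro x hx
    have hTx : T ≤ x := by linarith
    have hx0 : 0 < x := by linarith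
    have hii : IntervalIntegrable (fun t => ε / t^2) volume T x := by
      apply ContinuousOn.intervalIntegrable
      apply continuousOn_const.div (by fun_prop)
      intro t ht
      rw [Set.uIcc_of_le hTx] at ht
      have h0 : 0 < t := lt_of_lt_of_le hT0 ht.1
      positivity
    have hftc : ∫ t in T..x, A' t = A x - A T :=
      intervalIntegral.integral_eq_sub_of_hasDerivAt (fun t _ => hA t)
        (hA'c.intervalIntegrable T x)
    have h2 : ∫ t in T..x, ε / t^2 ≤ ∫ t in T..x, A' t := by
      apply intervalIntegral.integral_mono_on hTx hii (hA'c.intervalIntegrable T x)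
      intro t ht; exact hbig t ht.1
    have h3 : ∫ t in T..x, ε / t^2 = ε/T - ε/x := by
      rw [intervalIntegral.integral_eq_sub_of_hasDerivAt
        (f := fun s => -(ε/s)) (fun t ht => by
          rw [Set.uIcc_of_le hTx] at ht
          exact invsq_deriv t (by have := lt_of_lt_of_le hT0 ht.1; linarith) ε) hii]
      ring
    have h4 : ε/x ≤ ε/(2*T) := by
      apply div_le_div_of_nonneg_left hε.le (by positivity) hx
    have h5 : ε/(2*T) = ε/T - ε/(2*T) := by field_simp; ring
    have := hApos T
    rw [h3] at h2
    linarith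
  have hfin := hint.measure_ge_lt_top (show 0 < ε/(2*T) by positivity)
  have hsub : Set.Ici (2*T) ⊆ {a | ε/(2*T) ≤ A a} := fun x hx => key x hx
  have hinf : volume (Set.Ici (2*T)) = ⊤ := Real.volume_Ici
  have hle := measure_mono (μ := volume) hsub
  rw [hinf] at hle
  rw [top_le_iff.mp hle] at hfin
  exact lt_irrefl _ hfin

lemma no_int_bot (A A' : ℝ → ℝ) (hA : ∀ x, HasDerivAt A (A' x) x)
    (hA'c : Continuous A') (hApos : ∀ x, 0 ≤ A x) (hint : Integrable A)
    {T ε : ℝ} (hT : 1 ≤ T) (hε : 0 < ε) (hbig : ∀ x, x ≤ -T → A' x ≤ -(ε / x^2)) : False := by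
  have hT0 : 0 < T := lt_of_lt_of_le one_pos hT
  have key : ∀ x, x ≤ -(2*T) → ε/(2*T) ≤ A x := by
    intro x hx
    have hTx : x ≤ -T := by linarith
    have hx0 : x < 0 := by linarith
    have hii0 : IntervalIntegrable (fun t => ε / t^2) volume x (-T) := by
      apply ContinuousOn.intervalIntegrable
      apply continuousOn_const.div (by fun_prop)
      intro t ht
      rw [Set.uIcc_of_le hTx] at ht
      have h0 : t < 0 := lt_of_le_of_lt ht.2 (by linarith)
      exact pow_ne_zero 2 h0.ne
    have hii : IntervalIntegrable (fun t => -(ε / t^2)) volume x (-T) := by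
      exact hii0.neg
    have hftc : ∫ t in x..(-T), A' t = A (-T) - A x :=
      intervalIntegral.integral_eq_sub_of_hasDerivAt (fun t _ => hA t)
        (hA'c.intervalIntegrable x (-T))
    have h2 : ∫ t in x..(-T), A' t ≤ ∫ t in x..(-T), -(ε / t^2) := by
      apply intervalIntegral.integral_mono_on hTx (hA'c.intervalIntegrable x (-T)) hii
      intro t ht; exact hbig t ht.2
    have h3 : ∫ t in x..(-T), -(ε / t^2) = -(ε/T) - ε/x := by
      rw [intervalIntegral.integral_neg, intervalIntegral.integral_eq_sub_of_hasDerivAt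
        (f := fun s => -(ε/s)) (fun t ht => by
          rw [Set.uIcc_of_le hTx] at ht
          exact invsq_deriv t (by have := lt_of_le_of_lt ht.2 (by linarith : -T < 0); linarith) ε)
        hii0]
      ring
    have h4 : -(ε/(2*T)) ≤ ε/x := by
      rw [neg_le, ← div_neg]
      apply div_le_div_of_nonneg_left hε.le (by linarith) (by linarith)
    have h5 : ε/(2*T) = ε/T - ε/(2*T) := by field_simp; ring
    have := hApos (-T)
    rw [h3] at h2
    linarith
  have hfin := hint.measure_ge_lt_top (show 0 < ε/(2*T) by positivity)
  have hsub : Set.Iic (-(2*T)) ⊆ {a | ε/(2*T) ≤ A a} := fun x hx => key x hx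
  have hinf : volume (Set.Iic (-(2*T))) = ⊤ := Real.volume_Iic
  have hle := measure_mono (μ := volume) hsub
  rw [hinf] at hle
  rw [top_le_iff.mp hle] at hfin
  exact lt_irrefl _ hfin



/-- For all `φ` in the domain of the 1D harmonic oscillator `-d²/dx² + x²` on `L²(ℝ)`
(represented by a `C²` function with `φ`, `φ''`, `x²φ ∈ L²`), one has
`‖x²φ‖² ≤ ‖(-d²/dx² + x²)φ‖² + 2‖φ‖²`. -/
theorem harmonic_oscillator_1d_x_sq_bound (φ : ℝ → ℂ)
    (hsmooth : ContDiff ℝ 2 φ)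
    (hφ : MemLp φ 2 (volume : Measure ℝ))
    (hφ'' : MemLp (fun x => deriv (deriv φ) x) 2 (volume : Measure ℝ))
    (hx2φ : MemLp (fun x : ℝ => (x ^ 2 : ℝ) • φ x) 2 (volume : Measure ℝ)) :
    ∫ x : ℝ, ‖(x ^ 2 : ℝ) • φ x‖ ^ 2
      ≤ (∫ x : ℝ, ‖-(deriv (deriv φ) x) + (x ^ 2 : ℝ) • φ x‖ ^ 2) +
        2 * ∫ x : ℝ, ‖φ x‖ ^ 2 := by
  classical
  -- smoothness facts
  have hd1 : ∀ x, HasDerivAt φ (deriv φ x) x :=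
    fun x => (hsmooth.differentiable two_ne_zero x).hasDerivAt
  have hC1 : ContDiff ℝ 1 (deriv φ) := by
    have h2 : ContDiff ℝ (1 + 1 : ℕ) φ := by exact_mod_cast hsmooth
    exact (contDiff_succ_iff_deriv.mp h2).2.2
  have hd2 : ∀ x, HasDerivAt (deriv φ) (deriv (deriv φ) x) x :=
    fun x => (hC1.differentiable one_ne_zero x).hasDerivAt
  have hcφ : Continuous φ := hsmooth.continuous
  have hcφ' : Continuous (deriv φ) := hC1.continuous
  have hcφ'' : Continuous (deriv (deriv φ)) := (contDiff_one_iff_deriv.mp hC1).2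
  -- real auxiliary functions
  set A : ℝ → ℝ := fun x => ‖φ x‖ ^ 2 with hAdef
  set V : ℝ → ℝ := fun x => (deriv φ x * star (φ x)).re with hVdef
  set Vd : ℝ → ℝ :=
    fun x => (deriv (deriv φ) x * star (φ x) + deriv φ x * star (deriv φ x)).re with hVddef
  set f : ℝ → ℝ := fun x => ‖deriv (deriv φ) x‖ ^ 2 + 2 * x ^ 2 * ‖deriv φ x‖ ^ 2 with hfdef
  set h : ℝ → ℝ := fun x =>
    ‖-(deriv (deriv φ) x) + (x ^ 2 : ℝ) • φ x‖ ^ 2 + 2 * ‖φ x‖ ^ 2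
      - ‖(x ^ 2 : ℝ) • φ x‖ ^ 2 with hhdef
  set G : ℝ → ℝ := fun x => 2 * x * A x - 2 * x ^ 2 * V x with hGdef
  have hApos : ∀ x, 0 ≤ A x := fun x => by rw [hAdef]; positivity
  -- derivative of A
  have hA' : ∀ x, HasDerivAt A (2 * V x) x := by
    intro x
    have hW : HasDerivAt (fun y => φ y * star (φ y))
        (deriv φ x * star (φ x) + φ x * star (deriv φ x)) x := (hd1 x).mul (hd1 x).star
    have hre : HasDerivAt (fun y => (φ y * star (φ y)).re)
        ((deriv φ x * star (φ x) + φ x * star (deriv φ x)).re) x :=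
      Complex.reCLM.hasFDerivAt.comp_hasDerivAt x hW
    have hfun : (fun y => (φ y * star (φ y)).re) = A := by
      funext y
      simp only [hAdef, Complex.sq_norm, Complex.normSq_apply,
        Complex.mul_re, Complex.star_def, Complex.conj_re, Complex.conj_im]
      ring
    rw [hfun] at hre
    convert hre using 1
    simp only [hVdef, Complex.add_re, Complex.mul_re, Complex.star_def, Complex.conj_re,
      Complex.conj_im]
    ring
  -- derivative of V
  have hV' : ∀ x, HasDerivAt V (Vd x) x := by
    intro x
    exact Complex.reCLM.hasFDerivAt.comp_hasDerivAt x ((hd2 x).mul (hd1 x).star)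
  -- derivative of G is h - f
  have hG' : ∀ x, HasDerivAt G (h x - f x) x := by
    intro x
    have h1 : HasDerivAt (fun y : ℝ => 2 * y * A y) (2 * A x + 2 * x * (2 * V x)) x := by
      have := ((hasDerivAt_id x).const_mul 2).mul (hA' x)
      refine this.congr_deriv ?_
      simp only [id_eq]
      ring
    have h2 : HasDerivAt (fun y : ℝ => 2 * y ^ 2 * V y) (4 * x * V x + 2 * x ^ 2 * Vd x) x := by
      have hp : HasDerivAt (fun y : ℝ => 2 * y ^ 2) (4 * x) x := by
        have := (hasDerivAt_pow 2 x).const_mul (2 : ℝ)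
        refine this.congr_deriv ?_
        ring
      exact hp.mul (hV' x)
    have h3 := h1.sub h2
    have hGfun : G = fun y : ℝ => 2 * y * A y - 2 * y ^ 2 * V y := by
      funext y; rw [hGdef]
    rw [hGfun]
    refine h3.congr_deriv ?_
    simp only [hhdef, hfdef, hAdef, hVddef, Complex.sq_norm,
      Complex.normSq_apply, Complex.add_re, Complex.add_im, Complex.neg_re, Complex.neg_im,
      Complex.mul_re, Complex.mul_im, Complex.real_smul, Complex.ofReal_re, Complex.ofReal_im,
      Complex.star_def, Complex.conj_re, Complex.conj_im]
    ring
  -- integrability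
  have ihH : Integrable (fun x => ‖-(deriv (deriv φ) x) + (x ^ 2 : ℝ) • φ x‖ ^ 2) := by
    have hm : MemLp (fun x : ℝ => -(deriv (deriv φ) x) + (x ^ 2 : ℝ) • φ x) 2
        (volume : Measure ℝ) := hφ''.neg.add hx2φ
    exact hm.norm.integrable_sq
  have ihφ : Integrable A := hφ.norm.integrable_sq
  have ihx2 : Integrable (fun x : ℝ => ‖(x ^ 2 : ℝ) • φ x‖ ^ 2) := hx2φ.norm.integrable_sq
  have hint_h : Integrable h := by
    have := (ihH.add (ihφ.const_mul 2)).sub ihx2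
    exact this
  -- continuity
  have hcV : Continuous V := by
    rw [hVdef]; fun_prop
  have hcf : Continuous f := by
    rw [hfdef]; fun_prop
  have hch : Continuous h := by
    rw [hhdef]; fun_prop
  -- frequently at top
  have freqTop : ∀ ε : ℝ, 0 < ε → ∃ᶠ x in Filter.atTop, -ε < G x := by
    intro ε hε
    by_contra hc
    rw [Filter.not_frequently] at hc
    simp only [not_lt] at hc
    obtain ⟨T0, hT0⟩ := Filter.eventually_atTop.mp hc
    refine no_int_top A (fun x => 2 * V x) hA' (by fun_prop) hApos ihφ
      (le_max_right T0 1) hε ?_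
    intro x hx
    have hGx : G x ≤ -ε := hT0 x (le_trans (le_max_left _ _) hx)
    have hx1 : (1 : ℝ) ≤ x := le_trans (le_max_right _ _) hx
    have hxA := hApos x
    have hGx' : 2 * x * A x - 2 * x ^ 2 * V x ≤ -ε := hGx
    show ε / x ^ 2 ≤ 2 * V x
    rw [div_le_iff₀ (by positivity : (0:ℝ) < x ^ 2)]
    nlinarith
  -- frequently at bot
  have freqBot : ∀ ε : ℝ, 0 < ε → ∃ᶠ x in Filter.atBot, G x < ε := by
    intro ε hε
    by_contra hc
    rw [Filter.not_frequently] at hc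
    simp only [not_lt] at hc
    obtain ⟨T0, hT0⟩ := Filter.eventually_atBot.mp hc
    refine no_int_bot A (fun x => 2 * V x) hA' (by fun_prop) hApos ihφ
      (le_max_right (-T0) 1) hε ?_
    intro x hx
    have hGx : ε ≤ G x := hT0 x (by
      have : -(max (-T0) 1) ≤ T0 := by
        have := le_max_left (-T0) 1
        linarith
      linarith)
    have hx1 : x ≤ -1 := by
      have := le_max_right (-T0) 1
      linarith
    have hxA := hApos x
    have hGx' : ε ≤ 2 * x * A x - 2 * x ^ 2 * V x := hGx
    show 2 * V x ≤ -(ε / x ^ 2)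
    have hxsq : (0:ℝ) < x ^ 2 := by nlinarith [sq_nonneg (x + 1)]
    rw [show -(ε / x ^ 2) = -ε / x ^ 2 by ring, le_div_iff₀ hxsq]
    nlinarith [mul_nonneg (by linarith : (0:ℝ) ≤ -x) hxA]
  -- main estimate
  have main : ∀ ε : ℝ, 0 < ε → -(2 * ε) ≤ ∫ x, h x := by
    intro ε hε
    have hseqb : ∀ n : ℕ, ∃ x : ℝ, (n : ℝ) ≤ x ∧ -ε < G x := by
      intro n
      obtain ⟨x, hx1, hx2⟩ := Filter.frequently_atTop.mp (freqTop ε hε) (n : ℝ)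
      exact ⟨x, hx1, hx2⟩
    have hseqa : ∀ n : ℕ, ∃ x : ℝ, x ≤ -(n : ℝ) ∧ G x < ε := by
      intro n
      obtain ⟨x, hx1, hx2⟩ := Filter.frequently_atBot.mp (freqBot ε hε) (-(n : ℝ))
      exact ⟨x, hx1, hx2⟩
    choose b hb1 hb2 using hseqb
    choose a ha1 ha2 using hseqa
    have htb : Filter.Tendsto b Filter.atTop Filter.atTop :=
      Filter.tendsto_atTop_mono hb1 tendsto_natCast_atTop_atTop
    have hta : Filter.Tendsto a Filter.atTop Filter.atBot :=
      Filter.tendsto_atBot_mono ha1 (Filter.tendsto_neg_atTop_atBot.comp tendsto_natCast_atTop_atTop)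
    have hlim := MeasureTheory.intervalIntegral_tendsto_integral hint_h hta htb
    refine ge_of_tendsto hlim (Filter.Eventually.of_forall fun n => ?_)
    have hab : a n ≤ b n := by
      have h1 := ha1 n
      have h2 := hb1 n
      have h3 : (0:ℝ) ≤ (n:ℝ) := Nat.cast_nonneg n
      linarith
    have hfi : IntervalIntegrable f volume (a n) (b n) := hcf.intervalIntegrable _ _
    have hhfi : IntervalIntegrable (fun x => h x - f x) volume (a n) (b n) :=
      (hch.sub hcf).intervalIntegrable _ _
    have hsplit : ∫ x in (a n)..(b n), h x
        = (∫ x in (a n)..(b n), (h x - f x)) + ∫ x in (a n)..(b n), f x := by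
      rw [← intervalIntegral.integral_add hhfi hfi]
      apply intervalIntegral.integral_congr
      intro x _
      ring
    have hGint : ∫ x in (a n)..(b n), (h x - f x) = G (b n) - G (a n) :=
      intervalIntegral.integral_eq_sub_of_hasDerivAt (fun x _ => hG' x) hhfi
    have hfpos : 0 ≤ ∫ x in (a n)..(b n), f x := by
      apply intervalIntegral.integral_nonneg hab
      intro u _
      rw [hfdef]
      positivity
    have h1 := hb2 n
    have h2 := ha2 n
    rw [hsplit, hGint]
    linarith
  have h0 : 0 ≤ ∫ x, h x := by
    by_contra hneg
    push_neg at hneg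
    have := main (-(∫ x, h x) / 4) (by linarith)
    linarith
  -- rearrange
  have hsplit2 : ∫ x, h x
      = (∫ x : ℝ, ‖-(deriv (deriv φ) x) + (x ^ 2 : ℝ) • φ x‖ ^ 2)
        + (∫ x : ℝ, 2 * A x) - ∫ x : ℝ, ‖(x ^ 2 : ℝ) • φ x‖ ^ 2 := by
    have ihsum : Integrable (fun x : ℝ =>
        ‖-(deriv (deriv φ) x) + (x ^ 2 : ℝ) • φ x‖ ^ 2 + 2 * A x) volume :=
      ihH.add (ihφ.const_mul 2)
    rw [hhdef]
    rw [integral_sub ihsum ihx2, integral_add ihH (ihφ.const_mul 2)]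
  have h2A : ∫ x : ℝ, 2 * A x = 2 * ∫ x : ℝ, A x := integral_const_mul 2 A
  rw [hsplit2, h2A] at h0
  rw [hAdef]
  linarith
end

section
/- Fix a ∈ ℝ, a > 0, and b̃ ∈ (0,1), and let ρ ≥ 0. For each N ∈ ℕ, the ℂ²-valued function Ψ_{N}(ρ,φ) = (−r̃ sin φ · L_N¹(r̃²) e^{−r̃²/2}, r̃ cos φ · L_N¹(r̃²) e^{−r̃²/2}) with r̃ = (a−b)^{1/4} ρ is an eigenfunction of ℍ₂ with eigenvalue (2N+2)√(a−b), where b = b̃ a. -/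
open MeasureTheory

/-- The associated Laguerre polynomial `L_N¹(x) = Σ_{j=0}^N (-1)^j C(N+1, N-j) x^j / j!`. -/
noncomputable def lagOne (N : ℕ) (x : ℝ) : ℝ :=
  ∑ j ∈ Finset.range (N + 1),
    (-1 : ℝ) ^ j * (Nat.choose (N + 1) (N - j) : ℝ) * x ^ j / (Nat.factorial j : ℝ)

/-- The (classical) Laplacian of a real-valued function on `ℝ²`. -/
noncomputable def lap2R (f : ℝ × ℝ → ℝ) (p : ℝ × ℝ) : ℝ :=
  deriv (fun s => deriv (fun u => f (u, p.2)) s) p.1 +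
    deriv (fun s => deriv (fun u => f (p.1, u)) s) p.2

noncomputable def lagC (N j : ℕ) : ℝ :=
  (-1 : ℝ) ^ j * (Nat.choose (N + 1) (N - j) : ℝ) / (Nat.factorial j : ℝ)

lemma lagOne_eq (N : ℕ) (x : ℝ) :
    lagOne N x = ∑ j ∈ Finset.range (N + 1), lagC N j * x ^ j := by
  unfold lagOne lagC
  refine Finset.sum_congr rfl fun j _ => by ring

noncomputable def lagD1 (N : ℕ) (x : ℝ) : ℝ :=
  ∑ j ∈ Finset.range (N + 1), lagC N j * ((j : ℝ) * x ^ (j - 1))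

noncomputable def lagD2 (N : ℕ) (x : ℝ) : ℝ :=
  ∑ j ∈ Finset.range (N + 1), lagC N j * ((j : ℝ) * (((j - 1 : ℕ) : ℝ) * x ^ (j - 1 - 1)))

lemma hasDerivAt_lagOne (N : ℕ) (x : ℝ) : HasDerivAt (lagOne N) (lagD1 N x) x := by
  have : HasDerivAt (fun x => ∑ j ∈ Finset.range (N + 1), lagC N j * x ^ j)
      (lagD1 N x) x := by
    apply HasDerivAt.fun_sum
    intro j _
    exact (hasDerivAt_pow j x).const_mul (lagC N j)
  exact this.congr_of_eventuallyEq (Filter.Eventually.of_forall fun y => (lagOne_eq N y))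

lemma hasDerivAt_lagD1 (N : ℕ) (x : ℝ) : HasDerivAt (lagD1 N) (lagD2 N x) x := by
  apply HasDerivAt.fun_sum
  intro j _
  exact ((hasDerivAt_pow (j - 1) x).const_mul (j : ℝ)).const_mul (lagC N j)

lemma lagC_key (N j : ℕ) (hj : j < N) :
    lagC N (j + 1) * (((j : ℝ) + 1) * ((j : ℝ) + 2)) = -(((N : ℝ) - j)) * lagC N j := by
  have hnat : (N + 1).choose (N - j) * (N - j) = (N + 1).choose (N - (j + 1)) * (j + 2) := by
    have h := Nat.choose_succ_right_eq (N + 1) (N - j - 1)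
    have h1 : N - j - 1 + 1 = N - j := by omega
    have h2 : N + 1 - (N - j - 1) = j + 2 := by omega
    have h3 : N - (j + 1) = N - j - 1 := by omega
    rw [h1, h2] at h
    rw [h3, ← h]
  have hcast : ((N - j : ℕ) : ℝ) = (N : ℝ) - j := by
    have := hj.le
    push_cast [Nat.cast_sub this]
    ring
  have hr : ((N + 1).choose (N - j) : ℝ) * ((N : ℝ) - j)
      = ((N + 1).choose (N - (j + 1)) : ℝ) * ((j : ℝ) + 2) := by
    rw [← hcast]
    exact_mod_cast congrArg (Nat.cast (R := ℝ)) hnat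
  unfold lagC
  rw [Nat.factorial_succ, pow_succ]
  have hfj : (Nat.factorial j : ℝ) ≠ 0 := Nat.cast_ne_zero.2 (Nat.factorial_ne_zero j)
  have hfj1 : ((j : ℝ) + 1) ≠ 0 := by positivity
  push_cast
  field_simp
  linear_combination hr

lemma lagODE (N : ℕ) (x : ℝ) :
    x * lagD2 N x + (2 - x) * lagD1 N x + (N : ℝ) * lagOne N x = 0 := by
  have hterm : ∀ j : ℕ,
      x * (lagC N j * ((j : ℝ) * (((j - 1 : ℕ) : ℝ) * x ^ (j - 1 - 1))))
        + (2 - x) * (lagC N j * ((j : ℝ) * x ^ (j - 1)))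
        + (N : ℝ) * (lagC N j * x ^ j)
      = lagC N j * (((j : ℝ) * ((j : ℝ) + 1)) * x ^ (j - 1))
        + lagC N j * (((N : ℝ) - (j : ℝ)) * x ^ j) := by
    intro j
    match j with
    | 0 => norm_num; ring
    | 1 => norm_num; ring
    | (n + 2) =>
      have e1 : n + 2 - 1 = n + 1 := rfl
      have e2 : n + 2 - 1 - 1 = n := rfl
      rw [e2, e1]
      push_cast
      ring
  rw [lagD2, lagD1, lagOne_eq, Finset.mul_sum, Finset.mul_sum, Finset.mul_sum,
    ← Finset.sum_add_distrib, ← Finset.sum_add_distrib,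
    Finset.sum_congr rfl fun j _ => hterm j, Finset.sum_add_distrib]
  have hA : ∑ j ∈ Finset.range (N + 1), lagC N j * (((j : ℝ) * ((j : ℝ) + 1)) * x ^ (j - 1))
      = ∑ j ∈ Finset.range N, -(((N : ℝ) - j) * (lagC N j * x ^ j)) := by
    rw [Finset.sum_range_succ']
    simp only [Nat.cast_zero, zero_mul, mul_zero, add_zero, zero_add, Nat.cast_ofNat,
      pow_zero, Nat.zero_sub, Nat.cast_one]
    refine Finset.sum_congr rfl fun j hj => ?_
    have hk := lagC_key N j (Finset.mem_range.mp hj)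
    have e1 : j + 1 - 1 = j := rfl
    rw [e1]
    push_cast
    linear_combination (x ^ j) * hk
  have hB : ∑ j ∈ Finset.range (N + 1), lagC N j * (((N : ℝ) - (j : ℝ)) * x ^ j)
      = ∑ j ∈ Finset.range N, ((N : ℝ) - j) * (lagC N j * x ^ j) := by
    rw [Finset.sum_range_succ]
    simp only [sub_self, zero_mul, mul_zero, add_zero]
    refine Finset.sum_congr rfl fun j hj => by ring
  rw [hA, hB, ← Finset.sum_add_distrib]
  simp

noncomputable def gfun (N : ℕ) (t : ℝ) : ℝ := lagOne N t * Real.exp (-t / 2)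
noncomputable def gfun1 (N : ℕ) (t : ℝ) : ℝ :=
  (lagD1 N t - lagOne N t / 2) * Real.exp (-t / 2)
noncomputable def gfun2 (N : ℕ) (t : ℝ) : ℝ :=
  (lagD2 N t - lagD1 N t + lagOne N t / 4) * Real.exp (-t / 2)

lemma hasDerivAt_exp_neg_half (t : ℝ) :
    HasDerivAt (fun t : ℝ => Real.exp (-t / 2)) (Real.exp (-t / 2) * (-(1 / 2))) t := by
  have h1 : HasDerivAt (fun t : ℝ => -t / 2) (-(1 / 2)) t := by
    have := (hasDerivAt_id t).neg.div_const 2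
    refine this.congr_deriv ?_
    norm_num
  exact h1.exp

lemma hasDerivAt_gfun (N : ℕ) (t : ℝ) : HasDerivAt (gfun N) (gfun1 N t) t := by
  have h := (hasDerivAt_lagOne N t).mul (hasDerivAt_exp_neg_half t)
  have : gfun N = fun t => lagOne N t * Real.exp (-t / 2) := rfl
  rw [this]
  refine h.congr_deriv ?_
  unfold gfun1
  ring

lemma hasDerivAt_gfun1 (N : ℕ) (t : ℝ) : HasDerivAt (gfun1 N) (gfun2 N t) t := by
  have h := (((hasDerivAt_lagD1 N t).sub ((hasDerivAt_lagOne N t).div_const 2)).mul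
    (hasDerivAt_exp_neg_half t))
  have : gfun1 N = fun t => (lagD1 N t - lagOne N t / 2) * Real.exp (-t / 2) := rfl
  rw [this]
  refine h.congr_deriv ?_
  unfold gfun2
  simp only [Pi.sub_apply]
  ring

lemma gODE (N : ℕ) (t : ℝ) :
    -2 * t * gfun2 N t - 4 * gfun1 N t + t / 2 * gfun N t
      = (2 * (N : ℝ) + 2) * gfun N t := by
  have h := lagODE N t
  unfold gfun gfun1 gfun2
  linear_combination (-2 * Real.exp (-t / 2)) * h

section lap

variable (N : ℕ) (ω k : ℝ)

lemma hinner1 (x y : ℝ) : HasDerivAt (fun u : ℝ => ω * (u ^ 2 + y ^ 2)) (ω * (2 * x)) x := by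
  have := ((hasDerivAt_pow 2 x).add_const (y ^ 2)).const_mul ω
  refine this.congr_deriv ?_
  norm_num

lemma hinner2 (x y : ℝ) : HasDerivAt (fun u : ℝ => ω * (x ^ 2 + u ^ 2)) (ω * (2 * y)) y := by
  have := ((hasDerivAt_pow 2 y).const_add (x ^ 2)).const_mul ω
  refine this.congr_deriv ?_
  norm_num

lemma hlin (x : ℝ) : HasDerivAt (fun s : ℝ => ω * (2 * s)) (ω * 2) x := by
  have := ((hasDerivAt_id x).const_mul 2).const_mul ω
  refine this.congr_deriv ?_
  norm_num

lemma lap_aux (p : ℝ × ℝ) :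
    lap2R (fun q : ℝ × ℝ => k * q.2 * gfun N (ω * (q.1 ^ 2 + q.2 ^ 2))) p
      = k * p.2 * (4 * ω ^ 2 * (p.1 ^ 2 + p.2 ^ 2) * gfun2 N (ω * (p.1 ^ 2 + p.2 ^ 2))
          + 8 * ω * gfun1 N (ω * (p.1 ^ 2 + p.2 ^ 2))) := by
  have hX1 : ∀ x y : ℝ, HasDerivAt (fun u : ℝ => k * y * gfun N (ω * (u ^ 2 + y ^ 2)))
      (k * y * (gfun1 N (ω * (x ^ 2 + y ^ 2)) * (ω * (2 * x)))) x := fun x y =>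
    ((hasDerivAt_gfun N _).comp x (hinner1 ω x y)).const_mul (k * y)
  have hX2 : HasDerivAt
      (fun s : ℝ => k * p.2 * (gfun1 N (ω * (s ^ 2 + p.2 ^ 2)) * (ω * (2 * s))))
      (k * p.2 * (gfun2 N (ω * (p.1 ^ 2 + p.2 ^ 2)) * (ω * (2 * p.1)) * (ω * (2 * p.1))
        + gfun1 N (ω * (p.1 ^ 2 + p.2 ^ 2)) * (ω * 2))) p.1 := by
    have := (((hasDerivAt_gfun1 N _).comp p.1 (hinner1 ω p.1 p.2)).mul (hlin ω p.1)).const_mul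
      (k * p.2)
    exact this
  have hY1 : ∀ u0 : ℝ, HasDerivAt (fun u : ℝ => k * u * gfun N (ω * (p.1 ^ 2 + u ^ 2)))
      (k * gfun N (ω * (p.1 ^ 2 + u0 ^ 2))
        + k * u0 * (gfun1 N (ω * (p.1 ^ 2 + u0 ^ 2)) * (ω * (2 * u0)))) u0 := by
    intro u0
    have := ((hasDerivAt_id u0).const_mul k).mul
      ((hasDerivAt_gfun N _).comp u0 (hinner2 ω p.1 u0))
    refine this.congr_deriv ?_
    simp only [Function.comp, id_eq]
    ring
  have hY2 : HasDerivAt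
      (fun u : ℝ => k * gfun N (ω * (p.1 ^ 2 + u ^ 2))
        + k * u * (gfun1 N (ω * (p.1 ^ 2 + u ^ 2)) * (ω * (2 * u))))
      (k * (gfun1 N (ω * (p.1 ^ 2 + p.2 ^ 2)) * (ω * (2 * p.2)))
        + (k * (gfun1 N (ω * (p.1 ^ 2 + p.2 ^ 2)) * (ω * (2 * p.2)))
          + k * p.2 * (gfun2 N (ω * (p.1 ^ 2 + p.2 ^ 2)) * (ω * (2 * p.2)) * (ω * (2 * p.2))
            + gfun1 N (ω * (p.1 ^ 2 + p.2 ^ 2)) * (ω * 2)))) p.2 := by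
    have h1 := ((hasDerivAt_gfun N _).comp p.2 (hinner2 ω p.1 p.2)).const_mul k
    have h2 := ((hasDerivAt_id p.2).const_mul k).mul
      (((hasDerivAt_gfun1 N _).comp p.2 (hinner2 ω p.1 p.2)).mul (hlin ω p.2))
    have := h1.add h2
    refine this.congr_deriv ?_
    simp only [Function.comp, id_eq, Pi.mul_apply]
    ring
  show deriv (fun s => deriv (fun u => k * p.2 * gfun N (ω * (u ^ 2 + p.2 ^ 2))) s) p.1
      + deriv (fun s => deriv (fun u => k * u * gfun N (ω * (p.1 ^ 2 + u ^ 2))) s) p.2 = _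
  have e1 : (fun s => deriv (fun u => k * p.2 * gfun N (ω * (u ^ 2 + p.2 ^ 2))) s)
      = fun s => k * p.2 * (gfun1 N (ω * (s ^ 2 + p.2 ^ 2)) * (ω * (2 * s))) :=
    funext fun s => (hX1 s p.2).deriv
  have e2 : (fun s => deriv (fun u => k * u * gfun N (ω * (p.1 ^ 2 + u ^ 2))) s)
      = fun s => k * gfun N (ω * (p.1 ^ 2 + s ^ 2))
        + k * s * (gfun1 N (ω * (p.1 ^ 2 + s ^ 2)) * (ω * (2 * s))) :=
    funext fun s => (hY1 s).deriv
  rw [e1, e2, hX2.deriv, hY2.deriv]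
  ring

end lap

lemma lap2R_swap (f : ℝ × ℝ → ℝ) (p : ℝ × ℝ) :
    lap2R (fun q : ℝ × ℝ => f (q.2, q.1)) p = lap2R f (p.2, p.1) :=
  add_comm _ _

lemma pow_mul_exp_neg_le (m : ℕ) (u : ℝ) (hu : 0 ≤ u) :
    u ^ m * Real.exp (-u) ≤ (m.factorial : ℝ) * 2 ^ m * Real.exp (-u / 2) := by
  have h1 : (u / 2) ^ m / (m.factorial : ℝ) ≤ Real.exp (u / 2) :=
    Real.pow_div_factorial_le_exp (u / 2) (by positivity) m
  have hf : (0 : ℝ) < (m.factorial : ℝ) := by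
    exact_mod_cast m.factorial_pos
  have h2 : u ^ m ≤ (m.factorial : ℝ) * 2 ^ m * Real.exp (u / 2) := by
    rw [div_pow, div_div, div_le_iff₀ (by positivity)] at h1
    calc u ^ m ≤ Real.exp (u / 2) * (2 ^ m * (m.factorial : ℝ)) := h1
      _ = (m.factorial : ℝ) * 2 ^ m * Real.exp (u / 2) := by ring
  calc u ^ m * Real.exp (-u)
      ≤ ((m.factorial : ℝ) * 2 ^ m * Real.exp (u / 2)) * Real.exp (-u) :=
        mul_le_mul_of_nonneg_right h2 (Real.exp_nonneg _)
    _ = (m.factorial : ℝ) * 2 ^ m * Real.exp (-u / 2) := by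
        rw [mul_assoc, ← Real.exp_add]
        ring_nf

noncomputable def lagA (N : ℕ) : ℝ :=
  ∑ j ∈ Finset.range (N + 1), ((N + 1).choose (N - j) : ℝ) / (j.factorial : ℝ)

lemma abs_lagOne_le (N : ℕ) (t : ℝ) (ht : 0 ≤ t) :
    |lagOne N t| ≤ lagA N * (1 + t) ^ N := by
  rw [lagOne_eq, lagA, Finset.sum_mul]
  refine (Finset.abs_sum_le_sum_abs _ _).trans (Finset.sum_le_sum fun j hj => ?_)
  have h1t : (1 : ℝ) ≤ 1 + t := by linarith
  have htj : t ^ j ≤ (1 + t) ^ N := by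
    calc t ^ j ≤ (1 + t) ^ j := pow_le_pow_left₀ ht (by linarith) j
      _ ≤ (1 + t) ^ N := pow_le_pow_right₀ h1t (by
          exact Nat.lt_succ_iff.mp (Finset.mem_range.mp hj))
  have hcj : |lagC N j| = ((N + 1).choose (N - j) : ℝ) / (j.factorial : ℝ) := by
    unfold lagC
    rw [abs_div, abs_mul, abs_pow, abs_neg, abs_one, one_pow, one_mul,
      Nat.abs_cast, Nat.abs_cast]
  rw [abs_mul, hcj, abs_pow, abs_of_nonneg ht]
  exact mul_le_mul_of_nonneg_left htj (by positivity)

lemma core_bound (N : ℕ) : ∃ K : ℝ, 0 ≤ K ∧ ∀ t : ℝ, 0 ≤ t →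
    t * (lagOne N t) ^ 2 * Real.exp (-t) ≤ K * Real.exp (-t / 2) := by
  refine ⟨(lagA N) ^ 2 * (((2 * N + 1).factorial : ℝ) * 2 ^ (2 * N + 1)) * Real.exp 1,
    by positivity, fun t ht => ?_⟩
  have hA : 0 ≤ lagA N := by
    unfold lagA
    exact Finset.sum_nonneg fun j _ => by positivity
  have h1 : t * (lagOne N t) ^ 2 ≤ (lagA N) ^ 2 * (1 + t) ^ (2 * N + 1) := by
    have hL := abs_lagOne_le N t ht
    have h2 : (lagOne N t) ^ 2 ≤ (lagA N * (1 + t) ^ N) ^ 2 := by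
      rw [← sq_abs]
      exact pow_le_pow_left₀ (abs_nonneg _) hL 2
    calc t * (lagOne N t) ^ 2 ≤ (1 + t) * (lagA N * (1 + t) ^ N) ^ 2 := by
          apply mul_le_mul (by linarith) h2 (sq_nonneg _) (by linarith)
      _ = (lagA N) ^ 2 * (1 + t) ^ (2 * N + 1) := by ring
  have h3 : (1 + t) ^ (2 * N + 1) * Real.exp (-(1 + t))
      ≤ ((2 * N + 1).factorial : ℝ) * 2 ^ (2 * N + 1) * Real.exp (-(1 + t) / 2) :=
    pow_mul_exp_neg_le (2 * N + 1) (1 + t) (by linarith)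
  have h4 : (1 + t) ^ (2 * N + 1) * Real.exp (-t)
      ≤ ((2 * N + 1).factorial : ℝ) * 2 ^ (2 * N + 1) * Real.exp 1 * Real.exp (-t / 2) := by
    have e1 : Real.exp (-(1 + t)) = Real.exp (-t) * Real.exp (-1) := by
      rw [← Real.exp_add]; ring_nf
    have e2 : Real.exp (-(1 + t) / 2) = Real.exp (-t / 2) * Real.exp (-1 / 2) := by
      rw [← Real.exp_add]; ring_nf
    rw [e1, ← mul_assoc] at h3
    have h5 : (1 + t) ^ (2 * N + 1) * Real.exp (-t)
        ≤ ((2 * N + 1).factorial : ℝ) * 2 ^ (2 * N + 1) * Real.exp (-(1 + t) / 2)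
          * Real.exp 1 := by
      have := mul_le_mul_of_nonneg_right h3 (Real.exp_nonneg 1)
      calc (1 + t) ^ (2 * N + 1) * Real.exp (-t)
          = (1 + t) ^ (2 * N + 1) * Real.exp (-t) * (Real.exp (-1) * Real.exp 1) := by
            rw [← Real.exp_add]; norm_num
        _ = (1 + t) ^ (2 * N + 1) * Real.exp (-t) * Real.exp (-1) * Real.exp 1 := by ring
        _ ≤ _ := this
    calc (1 + t) ^ (2 * N + 1) * Real.exp (-t) ≤ _ := h5
      _ = ((2 * N + 1).factorial : ℝ) * 2 ^ (2 * N + 1) * Real.exp 1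
            * (Real.exp (-t / 2) * Real.exp (-1 / 2)) := by rw [e2]; ring
      _ ≤ ((2 * N + 1).factorial : ℝ) * 2 ^ (2 * N + 1) * Real.exp 1
            * Real.exp (-t / 2) := by
          have hle : Real.exp (-t / 2) * Real.exp (-1 / 2) ≤ Real.exp (-t / 2) * 1 := by
            apply mul_le_mul_of_nonneg_left _ (Real.exp_nonneg _)
            exact Real.exp_le_one_iff.mpr (by norm_num)
          calc ((2 * N + 1).factorial : ℝ) * 2 ^ (2 * N + 1) * Real.exp 1
                * (Real.exp (-t / 2) * Real.exp (-1 / 2))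
              ≤ ((2 * N + 1).factorial : ℝ) * 2 ^ (2 * N + 1) * Real.exp 1
                * (Real.exp (-t / 2) * 1) :=
                mul_le_mul_of_nonneg_left hle (by positivity)
            _ = ((2 * N + 1).factorial : ℝ) * 2 ^ (2 * N + 1) * Real.exp 1
                * Real.exp (-t / 2) := by ring
  calc t * (lagOne N t) ^ 2 * Real.exp (-t)
      ≤ (lagA N) ^ 2 * (1 + t) ^ (2 * N + 1) * Real.exp (-t) :=
        mul_le_mul_of_nonneg_right h1 (Real.exp_nonneg _)
    _ = (lagA N) ^ 2 * ((1 + t) ^ (2 * N + 1) * Real.exp (-t)) := by ring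
    _ ≤ (lagA N) ^ 2 * (((2 * N + 1).factorial : ℝ) * 2 ^ (2 * N + 1) * Real.exp 1
          * Real.exp (-t / 2)) := by
        exact mul_le_mul_of_nonneg_left h4 (by positivity)
    _ = (lagA N) ^ 2 * (((2 * N + 1).factorial : ℝ) * 2 ^ (2 * N + 1)) * Real.exp 1
          * Real.exp (-t / 2) := by ring

lemma lap_aux' (N : ℕ) (ω k : ℝ) (p : ℝ × ℝ) :
    lap2R (fun q : ℝ × ℝ => k * q.1 * gfun N (ω * (q.1 ^ 2 + q.2 ^ 2))) p
      = k * p.1 * (4 * ω ^ 2 * (p.1 ^ 2 + p.2 ^ 2) * gfun2 N (ω * (p.1 ^ 2 + p.2 ^ 2))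
          + 8 * ω * gfun1 N (ω * (p.1 ^ 2 + p.2 ^ 2))) := by
  have h : (fun q : ℝ × ℝ => k * q.1 * gfun N (ω * (q.1 ^ 2 + q.2 ^ 2)))
      = fun q : ℝ × ℝ =>
        (fun r : ℝ × ℝ => k * r.2 * gfun N (ω * (r.1 ^ 2 + r.2 ^ 2))) (q.2, q.1) := by
    funext q
    simp only
    rw [add_comm (q.2 ^ 2)]
  rw [h, lap2R_swap (fun r : ℝ × ℝ => k * r.2 * gfun N (ω * (r.1 ^ 2 + r.2 ^ 2))) p, lap_aux]
  show k * p.1 * (4 * ω ^ 2 * (p.2 ^ 2 + p.1 ^ 2) * gfun2 N (ω * (p.2 ^ 2 + p.1 ^ 2))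
      + 8 * ω * gfun1 N (ω * (p.2 ^ 2 + p.1 ^ 2))) = _
  rw [add_comm (p.2 ^ 2)]


/-- The `l = 0` eigenfunctions of the Renner--Teller leading order Hamiltonian `ℍ₂`
built from the `√(a-b)` oscillator: for `a > 0`, `b̃ ∈ (0,1)`, `b = b̃ a`, the function
`Ψ_N(ρ,φ) = (−r̃ sin φ · L_N¹(r̃²) e^{−r̃²/2}, r̃ cos φ · L_N¹(r̃²) e^{−r̃²/2})`,
`r̃ = (a−b)^{1/4} ρ`, is an eigenfunction of `ℍ₂` with eigenvalue `(2N+2)√(a−b)`. -/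
theorem renner_l0_minus_eigenfunctions (a btil : ℝ) (ha : 0 < a)
    (hb0 : 0 < btil) (hb1 : btil < 1) (b : ℝ) (hbdef : b = btil * a) (N : ℕ)
    (F f g : ℝ × ℝ → ℝ)
    (hF : F = fun p : ℝ × ℝ =>
      lagOne N (Real.sqrt (a - b) * (p.1 ^ 2 + p.2 ^ 2)) *
        Real.exp (-(Real.sqrt (a - b) * (p.1 ^ 2 + p.2 ^ 2)) / 2))
    (hf : f = fun p : ℝ × ℝ => -((a - b) ^ ((1 : ℝ) / 4) * p.2) * F p)
    (hg : g = fun p : ℝ × ℝ => ((a - b) ^ ((1 : ℝ) / 4) * p.1) * F p) :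
    -- polar form: the components are `−r̃ sin φ · L_N¹(r̃²) e^{−r̃²/2}` and
    -- `r̃ cos φ · L_N¹(r̃²) e^{−r̃²/2}` with `r̃ = (a−b)^{1/4} ρ`
    (∀ ρ : ℝ, 0 ≤ ρ → ∀ φ : ℝ,
      f (ρ * Real.cos φ, ρ * Real.sin φ) =
        -((a - b) ^ ((1 : ℝ) / 4) * ρ) * Real.sin φ *
          (lagOne N (((a - b) ^ ((1 : ℝ) / 4) * ρ) ^ 2) *
            Real.exp (-(((a - b) ^ ((1 : ℝ) / 4) * ρ) ^ 2) / 2)) ∧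
      g (ρ * Real.cos φ, ρ * Real.sin φ) =
        ((a - b) ^ ((1 : ℝ) / 4) * ρ) * Real.cos φ *
          (lagOne N (((a - b) ^ ((1 : ℝ) / 4) * ρ) ^ 2) *
            Real.exp (-(((a - b) ^ ((1 : ℝ) / 4) * ρ) ^ 2) / 2))) ∧
    -- the pair is square integrable
    MemLp f 2 (volume : Measure (ℝ × ℝ)) ∧ MemLp g 2 (volume : Measure (ℝ × ℝ)) ∧
    -- and satisfies the eigenvalue equation `ℍ₂ Ψ = (2N+2)√(a−b) Ψ` pointwise
    ∀ p : ℝ × ℝ,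
      (-(1 / 2) * lap2R f p +
          ((a + b) / 2 * p.1 ^ 2 + (a - b) / 2 * p.2 ^ 2) * f p + b * p.1 * p.2 * g p =
        (2 * N + 2) * Real.sqrt (a - b) * f p) ∧
      (-(1 / 2) * lap2R g p + b * p.1 * p.2 * f p +
          ((a - b) / 2 * p.1 ^ 2 + (a + b) / 2 * p.2 ^ 2) * g p =
        (2 * N + 2) * Real.sqrt (a - b) * g p) := by
  have hab : 0 < a - b := by nlinarith
  set ω : ℝ := Real.sqrt (a - b) with hωdef
  set c : ℝ := (a - b) ^ ((1 : ℝ) / 4) with hcdef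
  have hω : 0 < ω := Real.sqrt_pos.2 hab
  have hw2 : ω ^ 2 = a - b := Real.sq_sqrt hab.le
  have hc2 : c ^ 2 = ω := by
    rw [hcdef, hωdef, ← Real.rpow_natCast ((a - b) ^ ((1 : ℝ) / 4)) 2,
      ← Real.rpow_mul hab.le, Real.sqrt_eq_rpow]
    norm_num
  have hFg : F = fun p : ℝ × ℝ => gfun N (ω * (p.1 ^ 2 + p.2 ^ 2)) := by
    rw [hF]
    funext p
    unfold gfun
    rw [neg_div]
  have hfeq : f = fun q : ℝ × ℝ => -c * q.2 * gfun N (ω * (q.1 ^ 2 + q.2 ^ 2)) := by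
    rw [hf, hFg]
    funext q
    ring
  have hgeq : g = fun q : ℝ × ℝ => c * q.1 * gfun N (ω * (q.1 ^ 2 + q.2 ^ 2)) := by
    rw [hg, hFg]
  obtain ⟨K, hK0, hK⟩ := core_bound N
  have hLc : Continuous (lagOne N) :=
    Differentiable.continuous fun x => (hasDerivAt_lagOne N x).differentiableAt
  have hFc : Continuous F := by
    rw [hF]
    exact (hLc.comp (by fun_prop)).mul (Real.continuous_exp.comp (by fun_prop))
  have hfc : Continuous f := by
    rw [hf]
    exact ((continuous_const.mul continuous_snd).neg).mul hFc
  have hgc : Continuous g := by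
    rw [hg]
    exact (continuous_const.mul continuous_fst).mul hFc
  have hgauss : Integrable
      (fun p : ℝ × ℝ => Real.exp (-(ω / 2) * p.1 ^ 2) * Real.exp (-(ω / 2) * p.2 ^ 2))
      (volume : Measure (ℝ × ℝ)) := by
    rw [Measure.volume_eq_prod]
    exact (integrable_exp_neg_mul_sq (by positivity)).mul_prod
      (integrable_exp_neg_mul_sq (by positivity))
  have hmaster : ∀ p : ℝ × ℝ, (p.1 ^ 2 + p.2 ^ 2) * (F p) ^ 2
      ≤ (K / ω) * (Real.exp (-(ω / 2) * p.1 ^ 2) * Real.exp (-(ω / 2) * p.2 ^ 2)) := by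
    intro p
    have ht0 : 0 ≤ ω * (p.1 ^ 2 + p.2 ^ 2) := by positivity
    have hFsq : (F p) ^ 2
        = (lagOne N (ω * (p.1 ^ 2 + p.2 ^ 2))) ^ 2
          * Real.exp (-(ω * (p.1 ^ 2 + p.2 ^ 2))) := by
      rw [hF]
      simp only
      rw [mul_pow, pow_two (Real.exp _), ← Real.exp_add]
      congr 1
      ring
    have hr2 : p.1 ^ 2 + p.2 ^ 2 = (ω * (p.1 ^ 2 + p.2 ^ 2)) / ω := by
      field_simp
    calc (p.1 ^ 2 + p.2 ^ 2) * (F p) ^ 2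
        = (1 / ω) * ((ω * (p.1 ^ 2 + p.2 ^ 2))
            * (lagOne N (ω * (p.1 ^ 2 + p.2 ^ 2))) ^ 2
            * Real.exp (-(ω * (p.1 ^ 2 + p.2 ^ 2)))) := by
          rw [hFsq]
          field_simp
      _ ≤ (1 / ω) * (K * Real.exp (-(ω * (p.1 ^ 2 + p.2 ^ 2)) / 2)) :=
          mul_le_mul_of_nonneg_left (hK _ ht0) (by positivity)
      _ = (K / ω) * (Real.exp (-(ω / 2) * p.1 ^ 2) * Real.exp (-(ω / 2) * p.2 ^ 2)) := by
          rw [← Real.exp_add]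
          rw [show -(ω / 2) * p.1 ^ 2 + -(ω / 2) * p.2 ^ 2
            = -(ω * (p.1 ^ 2 + p.2 ^ 2)) / 2 by ring]
          ring
  refine ⟨?_, ?_, ?_, ?_⟩
  · intro ρ hρ φ
    have harg : ω * ((ρ * Real.cos φ) ^ 2 + (ρ * Real.sin φ) ^ 2) = (c * ρ) ^ 2 := by
      have hp := Real.sin_sq_add_cos_sq φ
      linear_combination ω * ρ ^ 2 * hp - ρ ^ 2 * hc2
    constructor
    · rw [hf, hF]
      simp only
      rw [harg]
      ring
    · rw [hg, hF]
      simp only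
      rw [harg]
      ring
  · refine (memLp_two_iff_integrable_sq hfc.aestronglyMeasurable).mpr ?_
    refine Integrable.mono' (hgauss.const_mul (c ^ 2 * (K / ω)))
      ((hfc.pow 2).aestronglyMeasurable) ?_
    filter_upwards with p
    rw [Real.norm_eq_abs, abs_of_nonneg (sq_nonneg _), hf]
    simp only
    calc (-(c * p.2) * F p) ^ 2 = c ^ 2 * (p.2 ^ 2 * (F p) ^ 2) := by ring
      _ ≤ c ^ 2 * ((p.1 ^ 2 + p.2 ^ 2) * (F p) ^ 2) := by
          apply mul_le_mul_of_nonneg_left _ (sq_nonneg c)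
          apply mul_le_mul_of_nonneg_right _ (sq_nonneg _)
          nlinarith [sq_nonneg p.1]
      _ ≤ c ^ 2 * ((K / ω) * (Real.exp (-(ω / 2) * p.1 ^ 2)
            * Real.exp (-(ω / 2) * p.2 ^ 2))) :=
          mul_le_mul_of_nonneg_left (hmaster p) (sq_nonneg c)
      _ = c ^ 2 * (K / ω) * (Real.exp (-(ω / 2) * p.1 ^ 2)
            * Real.exp (-(ω / 2) * p.2 ^ 2)) := by ring
  · refine (memLp_two_iff_integrable_sq hgc.aestronglyMeasurable).mpr ?_
    refine Integrable.mono' (hgauss.const_mul (c ^ 2 * (K / ω)))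
      ((hgc.pow 2).aestronglyMeasurable) ?_
    filter_upwards with p
    rw [Real.norm_eq_abs, abs_of_nonneg (sq_nonneg _), hg]
    simp only
    calc (c * p.1 * F p) ^ 2 = c ^ 2 * (p.1 ^ 2 * (F p) ^ 2) := by ring
      _ ≤ c ^ 2 * ((p.1 ^ 2 + p.2 ^ 2) * (F p) ^ 2) := by
          apply mul_le_mul_of_nonneg_left _ (sq_nonneg c)
          apply mul_le_mul_of_nonneg_right _ (sq_nonneg _)
          nlinarith [sq_nonneg p.2]
      _ ≤ c ^ 2 * ((K / ω) * (Real.exp (-(ω / 2) * p.1 ^ 2)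
            * Real.exp (-(ω / 2) * p.2 ^ 2))) :=
          mul_le_mul_of_nonneg_left (hmaster p) (sq_nonneg c)
      _ = c ^ 2 * (K / ω) * (Real.exp (-(ω / 2) * p.1 ^ 2)
            * Real.exp (-(ω / 2) * p.2 ^ 2)) := by ring
  · intro p
    have hlapf : lap2R f p = -c * p.2
        * (4 * ω ^ 2 * (p.1 ^ 2 + p.2 ^ 2) * gfun2 N (ω * (p.1 ^ 2 + p.2 ^ 2))
          + 8 * ω * gfun1 N (ω * (p.1 ^ 2 + p.2 ^ 2))) := by
      rw [hfeq]
      exact lap_aux N ω (-c) p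
    have hlapg : lap2R g p = c * p.1
        * (4 * ω ^ 2 * (p.1 ^ 2 + p.2 ^ 2) * gfun2 N (ω * (p.1 ^ 2 + p.2 ^ 2))
          + 8 * ω * gfun1 N (ω * (p.1 ^ 2 + p.2 ^ 2))) := by
      rw [hgeq]
      exact lap_aux' N ω c p
    have hfp : f p = -c * p.2 * gfun N (ω * (p.1 ^ 2 + p.2 ^ 2)) := by rw [hfeq]
    have hgp : g p = c * p.1 * gfun N (ω * (p.1 ^ 2 + p.2 ^ 2)) := by rw [hgeq]
    have hODE := gODE N (ω * (p.1 ^ 2 + p.2 ^ 2))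
    constructor
    · rw [hlapf, hfp, hgp]
      linear_combination (-(c * p.2) * ω) * hODE
        + (c * p.2 * gfun N (ω * (p.1 ^ 2 + p.2 ^ 2)) * (p.1 ^ 2 + p.2 ^ 2) / 2) * hw2
    · rw [hlapg, hfp, hgp]
      linear_combination ((c * p.1) * ω) * hODE
        + (-(c * p.1) * gfun N (ω * (p.1 ^ 2 + p.2 ^ 2)) * (p.1 ^ 2 + p.2 ^ 2) / 2) * hw2
end
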